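/- arXiv:2006.14757 — 2 statements merged into one kernel-verified Lean document; each statement's English description precedes it below -/
import Mathlib

section
/- For every n ≥ 1, (2α/h_{n-1}(t)) ∫_{-1}^{1} y·P_n(y,t)·P_{n-1}(y,t)·w(y,t)/(1-y^2) dy = n + r_n(t). -/
open MeasureTheory Set Polynomial intervalIntegral Filter Topology

section Helpers
variable {α t : ℝ} {w : ℝ → ℝ}

lemma rpow_cont' (hα : 0 < α) : Continuous fun s : ℝ => s ^ α :=
  continuous_iff_continuousAt.2 fun x => Real.continuousAt_rpow_const x α (Or.inr hα.le)

lemma w_meas' (hα : 0 < α)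
    (hw : ∀ x : ℝ, x ≠ 0 → w x = (1 - x ^ 2) ^ α * Real.exp (-t / x ^ 2))
    (hw0 : w 0 = 0) : Measurable w := by
  have : w = fun x => if x = 0 then 0 else (1 - x ^ 2) ^ α * Real.exp (-t / x ^ 2) := by
    funext x
    by_cases hx : x = 0
    · simp [hx, hw0]
    · simp [hx, hw x hx]
  rw [this]
  apply Measurable.ite (measurableSet_eq) measurable_const
  apply Measurable.mul
  · exact ((rpow_cont' hα).comp (continuous_const.sub (continuous_pow 2))).measurable
  · exact Real.measurable_exp.comp ((measurable_const.div ((measurable_id.pow_const 2))))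

lemma w_nonneg' (hw : ∀ x : ℝ, x ≠ 0 → w x = (1 - x ^ 2) ^ α * Real.exp (-t / x ^ 2))
    (hw0 : w 0 = 0) : ∀ x ∈ Set.Icc (-1:ℝ) 1, 0 ≤ w x := by
  intro x hx
  by_cases hx0 : x = 0
  · simp [hx0, hw0]
  · rw [hw x hx0]
    have h1 : (0:ℝ) ≤ 1 - x ^ 2 := by nlinarith [hx.1, hx.2]
    positivity

lemma w_le_exp (hα : 0 < α)
    (hw : ∀ x : ℝ, x ≠ 0 → w x = (1 - x ^ 2) ^ α * Real.exp (-t / x ^ 2))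
    {x : ℝ} (hx0 : x ≠ 0) (hx : x ∈ Set.Icc (-1:ℝ) 1) : w x ≤ Real.exp (-t / x ^ 2) := by
  rw [hw x hx0]
  have h1 : (0:ℝ) ≤ 1 - x ^ 2 := by nlinarith [hx.1, hx.2]
  have h2 : ((1:ℝ) - x ^ 2) ^ α ≤ 1 := Real.rpow_le_one h1 (by nlinarith [sq_nonneg x]) hα.le
  nlinarith [Real.exp_pos (-t / x ^ 2), Real.rpow_nonneg h1 α]

lemma expb1' {t x : ℝ} (ht : 0 < t) (hx : x ≠ 0) : Real.exp (-t / x ^ 2) ≤ x ^ 2 / t := by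
  have hx2 : 0 < x ^ 2 := by positivity
  have h1 : t / x ^ 2 ≤ Real.exp (t / x ^ 2) := (Real.add_one_le_exp _).trans' (by nlinarith)
  have h2 : Real.exp (-t / x ^ 2) = (Real.exp (t / x ^ 2))⁻¹ := by rw [← Real.exp_neg]; ring_nf
  rw [h2, inv_le_comm₀ (Real.exp_pos _) (by positivity)]
  calc (x ^ 2 / t)⁻¹ = t / x ^ 2 := by field_simp
    _ ≤ Real.exp (t / x ^ 2) := h1

lemma expb3' {t x : ℝ} (ht : 0 < t) (hx : x ≠ 0) : Real.exp (-t / x ^ 2) ≤ 27 * x ^ 6 / t ^ 3 := by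
  have hx2 : 0 < x ^ 2 := by positivity
  have hv : 0 < t / x ^ 2 := by positivity
  have h1 : t / x ^ 2 / 3 ≤ Real.exp (t / x ^ 2 / 3) := (Real.add_one_le_exp _).trans' (by linarith)
  have h3 : (t / x ^ 2 / 3) ^ 3 ≤ Real.exp (t / x ^ 2) := by
    calc (t / x ^ 2 / 3) ^ 3 ≤ (Real.exp (t / x ^ 2 / 3)) ^ 3 :=
          pow_le_pow_left₀ (by positivity) h1 3
      _ = Real.exp (t / x ^ 2) := by rw [← Real.exp_nat_mul]; norm_num; ring_nf
  have h2 : Real.exp (-t / x ^ 2) = (Real.exp (t / x ^ 2))⁻¹ := by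
    rw [← Real.exp_neg]; ring_nf
  rw [h2, inv_le_comm₀ (Real.exp_pos _) (by positivity)]
  calc (27 * x ^ 6 / t ^ 3)⁻¹ = (t / x ^ 2 / 3) ^ 3 := by field_simp; ring
    _ ≤ Real.exp (t / x ^ 2) := h3

lemma poly_bound' (u : Polynomial ℝ) : ∃ C, 0 ≤ C ∧ ∀ x ∈ Set.Icc (-1:ℝ) 1, |u.eval x| ≤ C := by
  obtain ⟨C, hC⟩ := isCompact_Icc.exists_bound_of_continuousOn (u.continuous).continuousOn
  exact ⟨max C 0, le_max_right _ _, fun x hx => (hC x hx).trans (le_max_left _ _)⟩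

lemma bdd_int' {f : ℝ → ℝ} (hm : Measurable f)
    {C : ℝ} (hb : ∀ x ∈ Set.Icc (-1:ℝ) 1, |f x| ≤ C) :
    IntervalIntegrable f volume (-1) 1 := by
  rw [intervalIntegrable_iff]
  apply MeasureTheory.Integrable.mono' (g := fun _ => C)
  · exact integrableOn_const (by
      rw [Set.uIoc_of_le (by norm_num : (-1:ℝ) ≤ 1)]; exact measure_Ioc_lt_top.ne)
  · exact hm.aestronglyMeasurable
  · filter_upwards [ae_restrict_mem measurableSet_uIoc] with x hx
    rw [Set.uIoc_of_le (by norm_num : (-1:ℝ) ≤ 1)] at hx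
    exact hb x ⟨hx.1.le, hx.2⟩

lemma wx3_bound (hα : 0 < α) (ht : 0 < t)
    (hw : ∀ x : ℝ, x ≠ 0 → w x = (1 - x ^ 2) ^ α * Real.exp (-t / x ^ 2))
    (hw0 : w 0 = 0) :
    ∀ x ∈ Set.Icc (-1:ℝ) 1, |w x / x ^ 3| ≤ 27 / t ^ 3 := by
  intro x hx
  by_cases hx0 : x = 0
  · simp only [hx0, hw0, zero_div, abs_zero]
    positivity
  · have hwnn : 0 ≤ w x := w_nonneg' hw hw0 x hx
    have hb : w x ≤ 27 * x ^ 6 / t ^ 3 :=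
      (w_le_exp hα hw hx0 hx).trans (expb3' ht hx0)
    rw [abs_div, div_le_iff₀ (by positivity : (0:ℝ) < |x ^ 3|), abs_of_nonneg hwnn]
    have hx6 : x ^ 6 = |x ^ 3| ^ 2 := by rw [sq_abs]; ring
    have hxa : |x ^ 3| ≤ 1 := by
      rw [abs_pow]
      calc |x| ^ 3 ≤ 1 ^ 3 := pow_le_pow_left₀ (abs_nonneg x) (abs_le.2 ⟨hx.1, hx.2⟩) 3
        _ = 1 := one_pow 3
    calc w x ≤ 27 * x ^ 6 / t ^ 3 := hb
      _ = 27 / t ^ 3 * |x ^ 3| * |x ^ 3| := by rw [hx6]; ring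
      _ ≤ 27 / t ^ 3 * 1 * |x ^ 3| := by
          apply mul_le_mul_of_nonneg_right _ (abs_nonneg _)
          exact mul_le_mul_of_nonneg_left hxa (by positivity)
      _ = 27 / t ^ 3 * |x ^ 3| := by ring

lemma int_poly_w (hα : 0 < α) (ht : 0 < t)
    (hw : ∀ x : ℝ, x ≠ 0 → w x = (1 - x ^ 2) ^ α * Real.exp (-t / x ^ 2))
    (hw0 : w 0 = 0) (u : Polynomial ℝ) :
    IntervalIntegrable (fun x => u.eval x * w x) volume (-1) 1 := by
  obtain ⟨C, hC0, hC⟩ := poly_bound' u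
  apply bdd_int' ((u.continuous.measurable).mul (w_meas' hα hw hw0)) (C := C)
  intro x hx
  have h1 : (0:ℝ) ≤ 1 - x ^ 2 := by nlinarith [hx.1, hx.2]
  have hwnn : 0 ≤ w x := w_nonneg' hw hw0 x hx
  have hwle : w x ≤ 1 := by
    by_cases hx0 : x = 0
    · simp [hx0, hw0]
    · calc w x ≤ Real.exp (-t / x ^ 2) := w_le_exp hα hw hx0 hx
        _ ≤ 1 := by
            rw [Real.exp_le_one_iff]
            have : (0:ℝ) < x ^ 2 := by positivity
            apply div_nonpos_of_nonpos_of_nonneg <;> linarith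
  simp only [Pi.mul_apply]
  rw [abs_mul, abs_of_nonneg hwnn]
  calc |u.eval x| * w x ≤ C * 1 := mul_le_mul (hC x hx) hwle hwnn hC0
    _ = C := mul_one C

lemma int_poly_w3 (hα : 0 < α) (ht : 0 < t)
    (hw : ∀ x : ℝ, x ≠ 0 → w x = (1 - x ^ 2) ^ α * Real.exp (-t / x ^ 2))
    (hw0 : w 0 = 0) (u : Polynomial ℝ) :
    IntervalIntegrable (fun x => u.eval x * w x / x ^ 3) volume (-1) 1 := by
  obtain ⟨C, hC0, hC⟩ := poly_bound' u
  apply bdd_int' (((u.continuous.measurable).mul (w_meas' hα hw hw0)).div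
    (measurable_id.pow_const 3)) (C := C * (27 / t ^ 3))
  intro x hx
  have h := wx3_bound hα ht hw hw0 x hx
  simp only [id_eq, Pi.div_apply, Pi.mul_apply]
  have e : |u.eval x * w x / x ^ 3| = |u.eval x| * |w x / x ^ 3| := by
    rw [← abs_mul]; ring_nf
  rw [e]
  exact mul_le_mul (hC x hx) h (abs_nonneg _) hC0

lemma base_bound' (α : ℝ) {b : ℝ} (hb1 : 1 ≤ b) (hb2 : b ≤ 2) :
    b ^ (α - 1) ≤ max 1 (2 ^ (α - 1) : ℝ) := by
  rcases le_total 1 α with hα1 | hα1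
  · exact le_trans (Real.rpow_le_rpow (by linarith) hb2 (by linarith)) (le_max_right _ _)
  · exact le_trans (Real.rpow_le_one_of_one_le_of_nonpos hb1 (by linarith)) (le_max_left _ _)

lemma w_div_bound (hα : 0 < α) (ht : 0 < t)
    (hw : ∀ x : ℝ, x ≠ 0 → w x = (1 - x ^ 2) ^ α * Real.exp (-t / x ^ 2))
    {x : ℝ} (hx0 : x ≠ 0) (h1 : -1 < x) (h2 : x < 1) :
    w x / (1 - x ^ 2) ≤ (1 - x) ^ (α - 1) * (1 + x) ^ (α - 1) := by
  have hpos : (0:ℝ) < 1 - x ^ 2 := by nlinarith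
  have h1' : (0:ℝ) < 1 - x := by linarith
  have h2' : (0:ℝ) < 1 + x := by linarith
  have hexp : Real.exp (-t / x ^ 2) ≤ 1 := by
    rw [Real.exp_le_one_iff]
    have : (0:ℝ) < x ^ 2 := by positivity
    apply div_nonpos_of_nonpos_of_nonneg <;> linarith
  have hwle : w x ≤ (1 - x ^ 2) ^ α := by
    rw [hw x hx0]
    nlinarith [Real.rpow_nonneg hpos.le α]
  have key : (1 - x ^ 2) ^ α = (1 - x) ^ (α - 1) * (1 + x) ^ (α - 1) * (1 - x ^ 2) := by
    have e1 : (1 - x ^ 2) ^ (α - 1) = (1 - x) ^ (α - 1) * (1 + x) ^ (α - 1) := by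
      rw [← Real.mul_rpow h1'.le h2'.le]; ring_nf
    calc (1 - x ^ 2) ^ α = (1 - x ^ 2) ^ (α - 1 + 1) := by ring_nf
      _ = (1 - x ^ 2) ^ (α - 1) * (1 - x ^ 2) := Real.rpow_add_one hpos.ne' _
      _ = (1 - x) ^ (α - 1) * (1 + x) ^ (α - 1) * (1 - x ^ 2) := by rw [e1]
  rw [div_le_iff₀ hpos]
  calc w x ≤ (1 - x ^ 2) ^ α := hwle
    _ = (1 - x) ^ (α - 1) * (1 + x) ^ (α - 1) * (1 - x ^ 2) := key

lemma int_sing (hα : 0 < α) (ht : 0 < t)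
    (hw : ∀ x : ℝ, x ≠ 0 → w x = (1 - x ^ 2) ^ α * Real.exp (-t / x ^ 2))
    (hw0 : w 0 = 0) (u : Polynomial ℝ) :
    IntervalIntegrable (fun x => x * (u.eval x * w x) / (1 - x ^ 2)) volume (-1) 1 := by
  obtain ⟨C, hC0, hC⟩ := poly_bound' u
  set c₁ : ℝ := max 1 (2 ^ (α - 1) : ℝ) with hc₁
  have hc₁0 : 0 ≤ c₁ := le_trans zero_le_one (le_max_left _ _)
  have hwnn := w_nonneg' hw hw0
  have fmeas : Measurable fun x => x * (u.eval x * w x) / (1 - x ^ 2) :=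
    (measurable_id.mul ((u.continuous.measurable).mul (w_meas' hα hw hw0))).div
      (measurable_const.sub (measurable_id.pow_const 2))
  have hbd : ∀ x, -1 < x → x < 1 →
      |x * (u.eval x * w x) / (1 - x ^ 2)| ≤ C * ((1 - x) ^ (α - 1) * (1 + x) ^ (α - 1)) := by
    intro x h1 h2
    by_cases hx0 : x = 0
    · subst hx0
      simp only [hw0, mul_zero, zero_mul, zero_div, abs_zero]
      positivity
    have hpos : (0:ℝ) < 1 - x ^ 2 := by nlinarith
    have hxm : x ∈ Set.Icc (-1:ℝ) 1 := ⟨h1.le, h2.le⟩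
    have hwx : 0 ≤ w x := hwnn x hxm
    have e1 : |x * (u.eval x * w x) / (1 - x ^ 2)| = |x| * |u.eval x| * w x / (1 - x ^ 2) := by
      rw [abs_div, abs_mul, abs_mul, abs_of_nonneg hwx, abs_of_pos hpos]; ring
    rw [e1]
    have step1 : |x| * |u.eval x| * w x / (1 - x ^ 2) ≤ C * (w x / (1 - x ^ 2)) := by
      rw [mul_div_assoc]
      have hx1 : |x| ≤ 1 := abs_le.2 ⟨h1.le, h2.le⟩
      have hq : 0 ≤ w x / (1 - x ^ 2) := by positivity
      have h4 : |x| * |u.eval x| ≤ C := by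
        calc |x| * |u.eval x| ≤ 1 * C := mul_le_mul hx1 (hC x hxm) (abs_nonneg _) zero_le_one
          _ = C := one_mul C
      exact mul_le_mul_of_nonneg_right h4 hq
    exact step1.trans (by
      have := w_div_bound hα ht hw hx0 h1 h2
      nlinarith)
  have hR : IntervalIntegrable (fun x => x * (u.eval x * w x) / (1 - x ^ 2)) volume 0 1 := by
    have hg0 : IntervalIntegrable (fun x : ℝ => (1 - x) ^ (α - 1)) volume 0 1 := by
      have := (intervalIntegrable_rpow' (by linarith : (-1:ℝ) < α - 1)
        (a := 0) (b := 1)).comp_sub_left 1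
      simpa using this.symm
    have hg : IntervalIntegrable (fun x : ℝ => C * c₁ * (1 - x) ^ (α - 1)) volume 0 1 :=
      hg0.const_mul _
    apply hg.mono_fun fmeas.aestronglyMeasurable
    filter_upwards [ae_restrict_mem measurableSet_uIoc] with x hx
    rw [Set.uIoc_of_le (by norm_num : (0:ℝ) ≤ 1)] at hx
    rcases eq_or_lt_of_le hx.2 with h1 | h1
    · subst h1
      simp only [one_pow, sub_self, div_zero, norm_zero]
      positivity
    · have key := hbd x (by linarith [hx.1]) h1
      have hb3 : (1 + x) ^ (α - 1) ≤ c₁ := base_bound' α (by linarith [hx.1]) (by linarith)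
      have hnn1 : (0:ℝ) ≤ (1 - x) ^ (α - 1) := Real.rpow_nonneg (by linarith) _
      have hnn2 : (0:ℝ) ≤ (1 + x) ^ (α - 1) := Real.rpow_nonneg (by linarith [hx.1]) _
      simp only [Real.norm_eq_abs]
      rw [abs_of_nonneg (by positivity : (0:ℝ) ≤ C * c₁ * (1 - x) ^ (α - 1))]
      calc |x * (u.eval x * w x) / (1 - x ^ 2)|
          ≤ C * ((1 - x) ^ (α - 1) * (1 + x) ^ (α - 1)) := key
        _ ≤ C * ((1 - x) ^ (α - 1) * c₁) :=
            mul_le_mul_of_nonneg_left (mul_le_mul_of_nonneg_left hb3 hnn1) hC0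
        _ = C * c₁ * (1 - x) ^ (α - 1) := by ring
  have hL : IntervalIntegrable (fun x => x * (u.eval x * w x) / (1 - x ^ 2)) volume (-1) 0 := by
    have hg0 : IntervalIntegrable (fun x : ℝ => (1 + x) ^ (α - 1)) volume (-1) 0 := by
      have := (intervalIntegrable_rpow' (by linarith : (-1:ℝ) < α - 1)
        (a := 0) (b := 1)).comp_add_right 1
      simpa [add_comm] using this
    have hg : IntervalIntegrable (fun x : ℝ => C * c₁ * (1 + x) ^ (α - 1)) volume (-1) 0 :=
      hg0.const_mul _
    apply hg.mono_fun fmeas.aestronglyMeasurable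
    filter_upwards [ae_restrict_mem measurableSet_uIoc] with x hx
    rw [Set.uIoc_of_le (by norm_num : (-1:ℝ) ≤ 0)] at hx
    have key := hbd x hx.1 (by linarith [hx.2])
    have hb3 : (1 - x) ^ (α - 1) ≤ c₁ := base_bound' α (by linarith [hx.2]) (by linarith [hx.1])
    have hnn1 : (0:ℝ) ≤ (1 - x) ^ (α - 1) := Real.rpow_nonneg (by linarith [hx.2]) _
    have hnn2 : (0:ℝ) ≤ (1 + x) ^ (α - 1) := Real.rpow_nonneg (by linarith [hx.1]) _
    simp only [Real.norm_eq_abs]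
    rw [abs_of_nonneg (by positivity : (0:ℝ) ≤ C * c₁ * (1 + x) ^ (α - 1))]
    calc |x * (u.eval x * w x) / (1 - x ^ 2)|
        ≤ C * ((1 - x) ^ (α - 1) * (1 + x) ^ (α - 1)) := key
      _ ≤ C * (c₁ * (1 + x) ^ (α - 1)) :=
          mul_le_mul_of_nonneg_left (mul_le_mul_of_nonneg_right hb3 hnn2) hC0
      _ = C * c₁ * (1 + x) ^ (α - 1) := by ring
  exact hL.trans hR

lemma w_deriv (hα : 0 < α) (ht : 0 < t)
    (hw : ∀ x : ℝ, x ≠ 0 → w x = (1 - x ^ 2) ^ α * Real.exp (-t / x ^ 2))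
    {x : ℝ} (hx0 : x ≠ 0) (h1 : -1 < x) (h2 : x < 1) :
    HasDerivAt w (w x * (-(2 * α * x / (1 - x ^ 2)) + 2 * t / x ^ 3)) x := by
  have hpos : (0:ℝ) < 1 - x ^ 2 := by nlinarith
  have hd1 : HasDerivAt (fun y : ℝ => 1 - y ^ 2) (-(2 * x ^ 1)) x :=
    (hasDerivAt_pow 2 x).const_sub 1
  have hd2 : HasDerivAt (fun y : ℝ => (1 - y ^ 2) ^ α)
      (-(2 * x ^ 1) * α * (1 - x ^ 2) ^ (α - 1)) x := by
    have := hd1.rpow_const (p := α) (Or.inl hpos.ne')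
    simpa using this
  have hd3 : HasDerivAt (fun y : ℝ => -t / y ^ 2)
      ((0 * x ^ 2 - -t * (2 * x ^ 1)) / (x ^ 2) ^ 2) x :=
    (hasDerivAt_const x (-t)).div (hasDerivAt_pow 2 x) (pow_ne_zero 2 hx0)
  have hd4 := hd3.exp
  have hd5 := hd2.mul hd4
  have hev : (fun y : ℝ => (1 - y ^ 2) ^ α * Real.exp (-t / y ^ 2)) =ᶠ[nhds x] w := by
    filter_upwards [isOpen_compl_singleton.mem_nhds
      (by simpa using hx0 : x ∈ ({0}ᶜ : Set ℝ))] with y hy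
    exact (hw y hy).symm
  have hd6 := hd5.congr_of_eventuallyEq hev.symm
  refine hd6.congr_deriv (Eq.symm ?_)
  rw [hw x hx0]
  have e : (1 - x ^ 2) ^ (α - 1) = (1 - x ^ 2) ^ α / (1 - x ^ 2) := by
    rw [eq_div_iff hpos.ne', ← Real.rpow_add_one hpos.ne']
    ring_nf
  rw [e]
  have hx3 : x ^ 3 ≠ 0 := pow_ne_zero 3 hx0
  field_simp
  ring

lemma F_deriv_zero (hα : 0 < α) (ht : 0 < t)
    (hw : ∀ x : ℝ, x ≠ 0 → w x = (1 - x ^ 2) ^ α * Real.exp (-t / x ^ 2))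
    (hw0 : w 0 = 0) (u : Polynomial ℝ) :
    HasDerivAt (fun x => u.eval x * w x) 0 0 := by
  obtain ⟨C, hC⟩ := isCompact_Icc.exists_bound_of_continuousOn
    (u.continuous.continuousOn (s := Set.Icc (-1:ℝ) 1))
  have hC0 : 0 ≤ C := le_trans (norm_nonneg _) (hC 0 (by norm_num))
  rw [hasDerivAt_iff_tendsto_slope]
  apply squeeze_zero_norm' (a := fun y => C / t * |y|)
  · filter_upwards [mem_nhdsWithin_of_mem_nhds (Icc_mem_nhds (by norm_num) (by norm_num)
      : Set.Icc (-1:ℝ) 1 ∈ 𝓝 (0:ℝ)), self_mem_nhdsWithin] with y hy hy0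
    simp only [Set.mem_compl_iff, Set.mem_singleton_iff] at hy0
    have hwy : 0 ≤ w y := w_nonneg' hw hw0 y hy
    have hb : w y ≤ y ^ 2 / t := (w_le_exp hα hw hy0 hy).trans (expb1' ht hy0)
    have e : slope (fun x => u.eval x * w x) 0 y = u.eval y * w y / y := by
      rw [slope_def_field]; simp [hw0]
    rw [e, Real.norm_eq_abs, abs_div, abs_mul, abs_of_nonneg hwy]
    rw [div_le_iff₀ (by positivity : (0:ℝ) < |y|)]
    have hy2 : y ^ 2 = |y| * |y| := by rw [← abs_mul, abs_of_nonneg (mul_self_nonneg y)]; ring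
    calc |u.eval y| * w y ≤ C * (y ^ 2 / t) := by
          apply mul_le_mul (hC y hy) hb hwy hC0
      _ = C / t * |y| * |y| := by rw [hy2]; ring
  · have : Tendsto (fun y : ℝ => C / t * |y|) (𝓝 0) (𝓝 (C / t * |0|)) :=
      (continuous_const.mul continuous_abs).tendsto 0
    simpa using this.mono_left nhdsWithin_le_nhds

lemma F_tend (hα : 0 < α)
    (hw : ∀ x : ℝ, x ≠ 0 → w x = (1 - x ^ 2) ^ α * Real.exp (-t / x ^ 2))
    (hw0 : w 0 = 0) (ht : 0 < t) (u : Polynomial ℝ) (l : Filter ℝ)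
    (h1 : Tendsto (fun x : ℝ => 1 - x ^ 2) l (𝓝 0))
    (h2 : ∀ᶠ x in l, x ∈ Set.Icc (-1:ℝ) 1) :
    Tendsto (fun x => u.eval x * w x) l (𝓝 0) := by
  obtain ⟨C, hC⟩ := isCompact_Icc.exists_bound_of_continuousOn
    (u.continuous.continuousOn (s := Set.Icc (-1:ℝ) 1))
  have hC0 : 0 ≤ C := le_trans (norm_nonneg _) (hC 0 (by norm_num))
  apply squeeze_zero_norm' (a := fun x => C * (1 - x ^ 2) ^ α)
  · filter_upwards [h2] with x hx
    have hwx : 0 ≤ w x := w_nonneg' hw hw0 x hx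
    have h0 : (0:ℝ) ≤ 1 - x ^ 2 := by nlinarith [hx.1, hx.2]
    have hble : w x ≤ (1 - x ^ 2) ^ α := by
      by_cases hx0 : x = 0
      · simp only [hx0, hw0]; positivity
      · rw [hw x hx0]
        have h2' : Real.exp (-t / x ^ 2) ≤ 1 := by
          rw [Real.exp_le_one_iff]
          have : (0:ℝ) < x ^ 2 := by positivity
          apply div_nonpos_of_nonpos_of_nonneg <;> linarith
        nlinarith [Real.rpow_nonneg h0 α]
    rw [Real.norm_eq_abs, abs_mul, abs_of_nonneg hwx]
    exact mul_le_mul (hC x hx) hble hwx hC0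
  · have a2 := ((rpow_cont' hα).tendsto 0).comp h1
    have : Tendsto (fun x : ℝ => ((1:ℝ) - x ^ 2) ^ α) l (𝓝 0) := by
      simpa [Function.comp_def, Real.zero_rpow hα.ne'] using a2
    simpa using this.const_mul C

lemma key_orth (P : ℕ → Polynomial ℝ)
    (hmonic : ∀ n, (P n).Monic) (hdeg : ∀ n, (P n).natDegree = n)
    (h : ℕ → ℝ)
    (horth : ∀ j k, (∫ x in (-1:ℝ)..1, (P j).eval x * (P k).eval x * w x)
      = if j = k then h j else 0)
    (intW : ∀ u : Polynomial ℝ, IntervalIntegrable (fun x => u.eval x * w x) volume (-1) 1) :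
    ∀ (N : ℕ) (u : Polynomial ℝ), u.natDegree ≤ N → ∀ k : ℕ, u.degree < (k : ℕ) →
      (∫ x in (-1:ℝ)..1, (u * P k).eval x * w x) = 0 := by
  intro N
  induction N with
  | zero =>
    intro u hN k hk
    have hu : u = C (u.coeff 0) := eq_C_of_natDegree_le_zero hN
    set c := u.coeff 0 with hc
    have hP0 : P 0 = 1 := ((hmonic 0).natDegree_eq_zero).1 (hdeg 0)
    by_cases hc0 : c = 0
    · rw [hu, hc0]; simp
    · have hk0 : k ≠ 0 := by
        rintro rfl
        rw [hu, degree_C hc0] at hk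
        simp at hk
      have e : ∀ x ∈ Set.uIcc (-1:ℝ) 1,
          (u * P k).eval x * w x = c * ((P 0).eval x * (P k).eval x * w x) := by
        intro x _
        rw [hu, hP0]
        simp only [eval_mul, eval_C, eval_one]
        ring
      rw [intervalIntegral.integral_congr e, intervalIntegral.integral_const_mul,
        horth 0 k, if_neg (fun hh => hk0 hh.symm), mul_zero]
  | succ N ih =>
    intro u hN k hk
    by_cases hN' : u.natDegree ≤ N
    · exact ih u hN' k hk
    push_neg at hN'
    have hu0 : u ≠ 0 := by
      intro hh; rw [hh] at hN'; simp at hN'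
    set d := u.natDegree with hd
    set c := u.leadingCoeff with hcdef
    have hc0 : c ≠ 0 := leadingCoeff_ne_zero.2 hu0
    have hdegu : u.degree = (d : ℕ) := degree_eq_natDegree hu0
    have hdk : d < k := by
      rw [hdegu] at hk
      exact_mod_cast hk
    have hPd0 : P d ≠ 0 := (hmonic d).ne_zero
    have hdegCP : (C c * P d).degree = (d : ℕ) := by
      rw [degree_C_mul hc0, degree_eq_natDegree hPd0, hdeg d]
    have hlc : (C c * P d).leadingCoeff = c := by
      rw [leadingCoeff_mul, leadingCoeff_C, (hmonic d).leadingCoeff, mul_one]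
    set v := u - C c * P d with hv
    have hvlt : v.degree < u.degree :=
      degree_sub_lt (hdegu.trans hdegCP.symm) hu0 (by rw [hlc])
    have hvk : v.degree < (k : ℕ) := hvlt.trans hk
    have hvN : v.natDegree ≤ N := by
      by_cases hv0 : v = 0
      · simp [hv0]
      · have := natDegree_lt_natDegree hv0 hvlt
        omega
    have split : ∀ x ∈ Set.uIcc (-1:ℝ) 1, (u * P k).eval x * w x =
        c * ((P d * P k).eval x * w x) + (v * P k).eval x * w x := by
      intro x _
      have hu' : u = C c * P d + v := by rw [hv]; ring
      rw [hu']
      simp only [eval_mul, eval_add, eval_C]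
      ring
    rw [intervalIntegral.integral_congr split,
      intervalIntegral.integral_add ((intW (P d * P k)).const_mul c) (intW (v * P k)),
      intervalIntegral.integral_const_mul]
    have h1 : (∫ x in (-1:ℝ)..1, (P d * P k).eval x * w x) = 0 := by
      simp only [eval_mul]
      rw [horth d k, if_neg hdk.ne]
    rw [h1, ih v hvN k hvk]
    ring

end Helpers

theorem stmt_4
    (α t : ℝ) (hα : 0 < α) (ht : 0 < t)
    (w : ℝ → ℝ)
    (hw : ∀ x : ℝ, x ≠ 0 → w x = (1 - x ^ 2) ^ α * Real.exp (-t / x ^ 2))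
    (hw0 : w 0 = 0)
    (P : ℕ → Polynomial ℝ)
    (hmonic : ∀ n, (P n).Monic)
    (hdeg : ∀ n, (P n).natDegree = n)
    (h : ℕ → ℝ)
    (hpos : ∀ n, 0 < h n)
    (horth : ∀ j k, (∫ x in (-1:ℝ)..1, (P j).eval x * (P k).eval x * w x)
      = if j = k then h j else 0)
    (r : ℕ → ℝ) (hr0 : r 0 = 0)
    (hr : ∀ n : ℕ, 1 ≤ n → r n = 2 * t / h (n - 1) *
      ∫ y in (-1:ℝ)..1, (P n).eval y * (P (n - 1)).eval y * w y / y ^ 3)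
    :
    ∀ n : ℕ, 1 ≤ n →
      (2 * α / h (n - 1)) *
          (∫ y in (-1:ℝ)..1, y * ((P n).eval y * (P (n - 1)).eval y * w y) / (1 - y ^ 2))
        = (n : ℝ) + r n := by
  intro n hn
  set m := n - 1 with hmdef
  have hmn : m < n := Nat.sub_lt hn one_pos
  have hnm : n = m + 1 := (Nat.succ_pred_eq_of_pos hn).symm
  have intW := int_poly_w hα ht hw hw0
  -- the Q functional
  set Q : Polynomial ℝ → ℝ := fun u => ∫ x in (-1:ℝ)..1, u.eval x * w x with hQdef
  have hQadd : ∀ u v : Polynomial ℝ, Q (u + v) = Q u + Q v := by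
    intro u v
    simp only [hQdef, eval_add, add_mul]
    exact intervalIntegral.integral_add (intW u) (intW v)
  have hQCmul : ∀ (c : ℝ) (u : Polynomial ℝ), Q (C c * u) = c * Q u := by
    intro c u
    simp only [hQdef, eval_mul, eval_C, mul_assoc]
    exact intervalIntegral.integral_const_mul c _
  have hQorth : ∀ j k, Q (P j * P k) = if j = k then h j else 0 := by
    intro j k
    simp only [hQdef, eval_mul]
    exact horth j k
  have hkey : ∀ (u : Polynomial ℝ) (k : ℕ), u.degree < (k : ℕ) → Q (u * P k) = 0 :=
    fun u k hk => key_orth P hmonic hdeg h horth intW u.natDegree u le_rfl k hk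
  -- ∫ (P n * P m)' w = n * h m
  have QA : Q (Polynomial.derivative (P n * P m)) = n * h m := by
    rw [derivative_mul, hQadd]
    have e2 : Q (P n * Polynomial.derivative (P m)) = 0 := by
      rw [mul_comm]
      apply hkey
      calc (Polynomial.derivative (P m)).degree < (P m).degree :=
            degree_derivative_lt (hmonic m).ne_zero
        _ = (m : ℕ) := by rw [degree_eq_natDegree (hmonic m).ne_zero, hdeg m]
        _ < (n : ℕ) := by exact_mod_cast hmn
    have e1 : Q (Polynomial.derivative (P n) * P m) = n * h m := by
      set s := Polynomial.derivative (P n) - C (n : ℝ) * P m with hsdef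
      have hsdeg : s.degree < (m : ℕ) := by
        rw [degree_lt_iff_coeff_zero]
        intro j hj
        simp only [hsdef, coeff_sub, coeff_derivative, coeff_C_mul]
        rcases eq_or_lt_of_le hj with hj1 | hj1
        · have hn' : n = j + 1 := by omega
          have c1 : (P n).coeff (j + 1) = 1 := by
            have := (hmonic n).coeff_natDegree
            rw [hdeg n] at this
            rw [← hn']
            exact this
          have c2 : (P m).coeff j = 1 := by
            rw [← hj1]
            have := (hmonic m).coeff_natDegree
            rwa [hdeg m] at this
          rw [c1, c2]
          have : (n : ℝ) = (j : ℝ) + 1 := by exact_mod_cast congrArg (Nat.cast : ℕ → ℝ) hn'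
          rw [this]; ring
        · have c1 : (P n).coeff (j + 1) = 0 := by
            apply coeff_eq_zero_of_natDegree_lt
            rw [hdeg n]; omega
          have c2 : (P m).coeff j = 0 := by
            apply coeff_eq_zero_of_natDegree_lt
            rw [hdeg m]; omega
          rw [c1, c2]
          ring
      have hds : Polynomial.derivative (P n) = C (n : ℝ) * P m + s := by
        rw [hsdef]; ring
      rw [hds, add_mul, hQadd, mul_assoc, hQCmul, hQorth m m, if_pos rfl,
        hkey s m hsdeg]
      ring
    rw [e1, e2]
    ring
  -- set up FTC
  set I : ℝ := ∫ y in (-1:ℝ)..1, y * ((P n).eval y * (P m).eval y * w y) / (1 - y ^ 2) with hI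
  set J : ℝ := ∫ y in (-1:ℝ)..1, (P n).eval y * (P m).eval y * w y / y ^ 3 with hJ
  have hIntB1 : IntervalIntegrable
      (fun x => x * ((P n).eval x * (P m).eval x * w x) / (1 - x ^ 2)) volume (-1) 1 := by
    have := int_sing hα ht hw hw0 (P n * P m)
    simpa only [eval_mul] using this
  have hIntB2 : IntervalIntegrable
      (fun x => (P n).eval x * (P m).eval x * w x / x ^ 3) volume (-1) 1 := by
    have := int_poly_w3 hα ht hw hw0 (P n * P m)
    simpa only [eval_mul] using this
  have hIntA : IntervalIntegrable
      (fun x => (Polynomial.derivative (P n * P m)).eval x * w x) volume (-1) 1 :=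
    intW _
  -- pointwise identity for the w-derivative term
  have hpt : ∀ x : ℝ,
      (P n * P m).eval x * (w x * (-(2 * α * x / (1 - x ^ 2)) + 2 * t / x ^ 3)) =
      -(2 * α) * (x * ((P n).eval x * (P m).eval x * w x) / (1 - x ^ 2)) +
        2 * t * ((P n).eval x * (P m).eval x * w x / x ^ 3) := by
    intro x
    by_cases hx0 : x = 0
    · subst hx0
      simp [hw0]
    by_cases hx1 : (1:ℝ) - x ^ 2 = 0
    · have hwx : w x = 0 := by
        rw [hw x hx0]
        have : (1:ℝ) - x ^ 2 = 0 := hx1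
        rw [this, Real.zero_rpow hα.ne', zero_mul]
      rw [eval_mul, hwx, hx1]
      simp
    · rw [eval_mul]
      have hx3 : x ^ 3 ≠ 0 := pow_ne_zero 3 hx0
      field_simp
  -- FTC
  have hB : IntervalIntegrable
      (fun x => (P n * P m).eval x * (w x * (-(2 * α * x / (1 - x ^ 2)) + 2 * t / x ^ 3)))
      volume (-1) 1 := by
    have : (fun x => (P n * P m).eval x * (w x * (-(2 * α * x / (1 - x ^ 2)) + 2 * t / x ^ 3)))
        = fun x => -(2 * α) * (x * ((P n).eval x * (P m).eval x * w x) / (1 - x ^ 2)) +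
          2 * t * ((P n).eval x * (P m).eval x * w x / x ^ 3) := funext hpt
    rw [this]
    exact (hIntB1.const_mul _).add (hIntB2.const_mul _)
  have hFTC : (∫ x in (-1:ℝ)..1,
      ((Polynomial.derivative (P n * P m)).eval x * w x +
        (P n * P m).eval x * (w x * (-(2 * α * x / (1 - x ^ 2)) + 2 * t / x ^ 3)))) = 0 - 0 := by
    apply intervalIntegral.integral_eq_sub_of_hasDerivAt_of_tendsto (by norm_num)
    · intro x hx
      by_cases hx0 : x = 0
      · subst hx0
        have hzz := F_deriv_zero hα ht hw hw0 (P n * P m)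
        refine hzz.congr_deriv ?_
        simp [hw0]
      · exact ((P n * P m).hasDerivAt x).mul (w_deriv hα ht hw hx0 hx.1 hx.2)
    · exact hIntA.add hB
    · apply F_tend hα hw hw0 ht (P n * P m)
      · have hc : Continuous fun x : ℝ => 1 - x ^ 2 := continuous_const.sub (continuous_pow 2)
        have := (hc.tendsto (-1 : ℝ)).mono_left (nhdsWithin_le_nhds (s := Set.Ioi (-1:ℝ)))
        norm_num at this
        exact this
      · filter_upwards [Ioo_mem_nhdsGT_of_mem
          (show (-1:ℝ) ∈ Set.Ico (-1:ℝ) 1 by norm_num)] with x hx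
        exact ⟨hx.1.le, hx.2.le⟩
    · apply F_tend hα hw hw0 ht (P n * P m)
      · have hc : Continuous fun x : ℝ => 1 - x ^ 2 := continuous_const.sub (continuous_pow 2)
        have := (hc.tendsto (1 : ℝ)).mono_left (nhdsWithin_le_nhds (s := Set.Iio (1:ℝ)))
        norm_num at this
        exact this
      · filter_upwards [Ioo_mem_nhdsLT_of_mem
          (show (1:ℝ) ∈ Set.Ioc (-1:ℝ) 1 by norm_num)] with x hx
        exact ⟨hx.1.le, hx.2.le⟩
  -- split the integral
  have hsplit : (∫ x in (-1:ℝ)..1,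
      ((Polynomial.derivative (P n * P m)).eval x * w x +
        (P n * P m).eval x * (w x * (-(2 * α * x / (1 - x ^ 2)) + 2 * t / x ^ 3)))) =
      Q (Polynomial.derivative (P n * P m)) + (-(2 * α) * I + 2 * t * J) := by
    rw [intervalIntegral.integral_add hIntA hB]
    congr 1
    have e : (fun x => (P n * P m).eval x * (w x * (-(2 * α * x / (1 - x ^ 2)) + 2 * t / x ^ 3)))
        = fun x => -(2 * α) * (x * ((P n).eval x * (P m).eval x * w x) / (1 - x ^ 2)) +
          2 * t * ((P n).eval x * (P m).eval x * w x / x ^ 3) := funext hpt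
    rw [e, intervalIntegral.integral_add (hIntB1.const_mul _) (hIntB2.const_mul _),
      intervalIntegral.integral_const_mul, intervalIntegral.integral_const_mul]
  have hmain : 2 * α * I = n * h m + 2 * t * J := by
    have := hFTC
    rw [hsplit, QA] at this
    linarith
  -- conclude
  have hrn : r n = 2 * t / h m * J := by rw [hr n hn]
  rw [hrn]
  have hh : h m ≠ 0 := (hpos m).ne'
  field_simp
  linarith [hmain]
end

section
/- For every n ≥ 0, [1-(-1)^n]·t + (2n+1+2α)·β_n(t) - 2·p(n,t) = n + r_n(t), where β_0(t):=0, r_0(t):=0, and p(n,t) is the coefficient of x^{n-2} in P_n(x,t) (with p(0,t)=p(1,t)=0). -/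
open Polynomial intervalIntegral Real Filter Set


lemma exp_neg_le_aux {u : ℝ} (hu : 0 < u) : Real.exp (-u) ≤ 4 / u ^ 2 := by
  have h1 : u / 2 + 1 ≤ Real.exp (u / 2) := Real.add_one_le_exp _
  have h3 : (u / 2) ^ 2 ≤ (Real.exp (u / 2)) ^ 2 := by
    apply pow_le_pow_left₀ (by positivity) (by linarith)
  have h4 : (Real.exp (u/2))^2 = Real.exp u := by
    rw [← Real.exp_nat_mul]; norm_num; ring_nf
  have h5 : u ^ 2 / 4 ≤ Real.exp u := by nlinarith [h3, h4]
  rw [Real.exp_neg, inv_le_iff_one_le_mul₀ (Real.exp_pos u)]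
  rw [div_mul_eq_mul_div, le_div_iff₀ (by positivity)]
  nlinarith

section W
variable {α t : ℝ} (hα : 0 < α) (ht : 0 < t) {w : ℝ → ℝ}
  (hw : ∀ x : ℝ, x ≠ 0 → w x = (1 - x ^ 2) ^ α * Real.exp (-t / x ^ 2))
  (hw0 : w 0 = 0)

include hα ht hw hw0

lemma w_bound : ∀ x : ℝ, x ∈ Ioo (-1:ℝ) 1 → |w x| ≤ (1-x^2)^α * (4 * x^4 / t^2) := by
  intro x hx
  rcases eq_or_ne x 0 with rfl | hx0
  · simp [hw0]
  · rw [hw x hx0]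
    have h2 : (0:ℝ) < 1 - x^2 := by
      rcases hx with ⟨h1, h2⟩; nlinarith
    have hb : (0:ℝ) < t / x^2 := by positivity
    have : Real.exp (-t / x^2) ≤ 4 / (t/x^2)^2 := by
      rw [neg_div]; exact exp_neg_le_aux hb
    have h4 : 4 / (t/x^2)^2 = 4 * x^4 / t^2 := by
      field_simp
    rw [abs_mul, abs_of_nonneg (Real.rpow_nonneg h2.le α),
        abs_of_nonneg (Real.exp_nonneg _)]
    apply mul_le_mul_of_nonneg_left _ (Real.rpow_nonneg h2.le α)
    rw [← h4]; exact this

lemma w_cont : Continuous w := by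
  rw [continuous_iff_continuousAt]
  intro x₀
  rcases eq_or_ne x₀ 0 with rfl | hx0
  · -- squeeze at 0
    have hb : ∀ᶠ x in nhds (0:ℝ), ‖w x‖ ≤ |1 - x^2|^α * (4 * x^4 / t^2) := by
      filter_upwards [eventually_mem_nhds_iff.mpr (Metric.ball_mem_nhds (0:ℝ) one_pos)] with x hx
      have hx1 : x ∈ Ioo (-1:ℝ) 1 := by
        have := Metric.mem_ball.mp (mem_of_mem_nhds hx)
        rw [Real.dist_eq, sub_zero] at this
        constructor <;> [linarith [neg_abs_le x]; linarith [le_abs_self x]]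
      have h2 : (0:ℝ) < 1 - x^2 := by rcases hx1 with ⟨a, b⟩; nlinarith
      rw [abs_of_pos h2]
      exact w_bound hα ht hw hw0 x hx1
    have hlim : Tendsto (fun x : ℝ => |1 - x^2|^α * (4 * x^4 / t^2)) (nhds 0) (nhds 0) := by
      have : Continuous (fun x : ℝ => |1 - x^2|^α * (4 * x^4 / t^2)) := by
        apply Continuous.mul
        · apply Continuous.rpow_const (by continuity)
          intro x; right; exact hα.le
        · continuity
      have h0 : (fun x : ℝ => |1 - x^2|^α * (4 * x^4 / t^2)) 0 = 0 := by norm_num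
      simpa [h0] using this.tendsto 0
    have := squeeze_zero_norm' hb hlim
    unfold ContinuousAt
    simpa [hw0] using this
  · have hF : ContinuousAt (fun x : ℝ => (1 - x ^ 2) ^ α * Real.exp (-t / x ^ 2)) x₀ := by
      apply ContinuousAt.mul
      · exact (Continuous.rpow_const (by continuity) (fun x => Or.inr hα.le)).continuousAt
      · exact (Real.continuous_exp.continuousAt).comp
          ((continuousAt_const.div (by fun_prop) (pow_ne_zero 2 hx0)))
    apply hF.congr
    filter_upwards [isOpen_ne.mem_nhds hx0] with x hx
    exact (hw x hx).symm

lemma w_div_sq_cont : Continuous (fun x => w x / x^2) := by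
  rw [continuous_iff_continuousAt]
  intro x₀
  rcases eq_or_ne x₀ 0 with rfl | hx0
  · have hb : ∀ᶠ x in nhds (0:ℝ), ‖w x / x^2‖ ≤ 4 * x^2 / t^2 := by
      filter_upwards [eventually_mem_nhds_iff.mpr (Metric.ball_mem_nhds (0:ℝ) one_pos)] with x hx
      have hx1 : x ∈ Ioo (-1:ℝ) 1 := by
        have := Metric.mem_ball.mp (mem_of_mem_nhds hx)
        rw [Real.dist_eq, sub_zero] at this
        constructor <;> [linarith [neg_abs_le x]; linarith [le_abs_self x]]
      rcases eq_or_ne x 0 with rfl | hx0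
      · simp [hw0]
      · have h2 : (0:ℝ) < 1 - x^2 := by rcases hx1 with ⟨a, b⟩; nlinarith
        have h1 : |w x| ≤ (1-x^2)^α * (4 * x^4 / t^2) := w_bound hα ht hw hw0 x hx1
        have h3 : (1-x^2:ℝ)^α ≤ 1 := by
          apply Real.rpow_le_one h2.le (by nlinarith) hα.le
        have h5 : |w x| ≤ 4 * x^4 / t^2 := by
          calc |w x| ≤ (1-x^2)^α * (4 * x^4 / t^2) := h1
          _ ≤ 1 * (4 * x^4 / t^2) := by
              apply mul_le_mul_of_nonneg_right h3 (by positivity)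
          _ = 4 * x^4 / t^2 := one_mul _
        rw [norm_div, norm_pow, Real.norm_eq_abs, Real.norm_eq_abs]
        rw [div_le_iff₀ (by positivity)]
        calc |w x| ≤ 4 * x^4 / t^2 := h5
        _ = 4 * x^2 / t^2 * |x|^2 := by rw [sq_abs]; ring
    have hlim : Tendsto (fun x : ℝ => 4 * x^2 / t^2) (nhds 0) (nhds 0) := by
      have : Continuous (fun x : ℝ => 4 * x^2 / t^2) := by continuity
      simpa using this.tendsto 0
    have := squeeze_zero_norm' hb hlim
    unfold ContinuousAt
    simpa [hw0] using this
  · exact ((w_cont hα ht hw hw0).continuousAt.div (by fun_prop) (pow_ne_zero 2 hx0))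

lemma w_even : ∀ x : ℝ, w (-x) = w x := by
  intro x
  rcases eq_or_ne x 0 with rfl | hx0
  · simp
  · rw [hw x hx0, hw (-x) (neg_ne_zero.mpr hx0)]
    ring_nf

lemma w_hasDeriv_zero : HasDerivAt w 0 0 := by
  rw [hasDerivAt_iff_tendsto_slope]
  have hb : ∀ᶠ x in nhdsWithin (0:ℝ) {(0:ℝ)}ᶜ, ‖slope w 0 x‖ ≤ 4 * |x|^3 / t^2 := by
    filter_upwards [self_mem_nhdsWithin,
      eventually_nhdsWithin_of_eventually_nhds
        (eventually_mem_nhds_iff.mpr (Metric.ball_mem_nhds (0:ℝ) one_pos))] with x hx0 hx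
    have hx1 : x ∈ Ioo (-1:ℝ) 1 := by
      have := Metric.mem_ball.mp (mem_of_mem_nhds hx)
      rw [Real.dist_eq, sub_zero] at this
      constructor <;> [linarith [neg_abs_le x]; linarith [le_abs_self x]]
    have hx0' : x ≠ 0 := hx0
    have h2 : (0:ℝ) < 1 - x^2 := by rcases hx1 with ⟨a, b⟩; nlinarith
    have h1 : |w x| ≤ (1-x^2)^α * (4 * x^4 / t^2) := w_bound hα ht hw hw0 x hx1
    have h3 : (1-x^2:ℝ)^α ≤ 1 := Real.rpow_le_one h2.le (by nlinarith) hα.le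
    have h5 : |w x| ≤ 4 * x^4 / t^2 := by
      calc |w x| ≤ (1-x^2)^α * (4 * x^4 / t^2) := h1
      _ ≤ 1 * (4 * x^4 / t^2) := mul_le_mul_of_nonneg_right h3 (by positivity)
      _ = 4 * x^4 / t^2 := one_mul _
    have habs : |x|^3 * |x| = x^4 := by
      rw [← pow_succ, ← abs_pow, abs_of_nonneg (by positivity : (0:ℝ) ≤ x^4)]
    rw [slope_def_field, hw0]
    rw [Real.norm_eq_abs, abs_div]
    simp only [sub_zero, zero_sub, abs_neg]
    rw [div_le_iff₀ (abs_pos.mpr hx0')]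
    calc |w x| ≤ 4 * x^4 / t^2 := h5
    _ = 4 * |x|^3/t^2 * |x| := by
        rw [div_mul_eq_mul_div, mul_assoc, habs]
  have hlim : Tendsto (fun x : ℝ => 4 * |x|^3 / t^2) (nhdsWithin (0:ℝ) {(0:ℝ)}ᶜ) (nhds 0) := by
    have : Continuous (fun x : ℝ => 4 * |x|^3 / t^2) := by
      apply Continuous.div_const; continuity
    have h := (this.tendsto 0)
    simp only [abs_zero] at h
    norm_num at h
    exact h.mono_left nhdsWithin_le_nhds
  exact squeeze_zero_norm' hb hlim

end W


section W
variable {α t : ℝ} (hα : 0 < α) (ht : 0 < t) {w : ℝ → ℝ}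
  (hw : ∀ x : ℝ, x ≠ 0 → w x = (1 - x ^ 2) ^ α * Real.exp (-t / x ^ 2))
  (hw0 : w 0 = 0)

include hα ht hw hw0

lemma w_hasDeriv {x : ℝ} (hx : x ∈ Ioo (-1:ℝ) 1) (hx0 : x ≠ 0) :
    HasDerivAt w ((-2*α*x/(1-x^2) + 2*t/x^3) * w x) x := by
  have h2 : (0:ℝ) < 1 - x^2 := by rcases hx with ⟨a, b⟩; nlinarith
  have hrp : HasDerivAt (fun y : ℝ => (1 - y ^ 2) ^ α) ((-2*x) * α * (1-x^2)^(α-1)) x := by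
    have hbase : HasDerivAt (fun y : ℝ => 1 - y ^ 2) (-2*x) x := by
      have := ((hasDerivAt_pow 2 x).const_sub 1)
      simpa using this.congr_deriv (by ring)
    exact hbase.rpow_const (Or.inl h2.ne')
  have hexp : HasDerivAt (fun y : ℝ => Real.exp (-t / y ^ 2))
      (Real.exp (-t/x^2) * ((0 * x^2 - (-t) * (2*x)) / (x^2)^2)) x := by
    have hdiv : HasDerivAt (fun y : ℝ => -t / y ^ 2) ((0 * x^2 - (-t) * (2*x)) / (x^2)^2) x := by
      have hd : HasDerivAt (fun y : ℝ => y ^ 2) (2*x) x := by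
        simpa using hasDerivAt_pow 2 x
      exact (hasDerivAt_const x (-t)).div hd (pow_ne_zero 2 hx0)
    exact hdiv.exp
  have hF : HasDerivAt (fun y : ℝ => (1 - y ^ 2) ^ α * Real.exp (-t / y ^ 2))
      (((-2*x) * α * (1-x^2)^(α-1)) * Real.exp (-t/x^2)
        + (1-x^2)^α * (Real.exp (-t/x^2) * ((0 * x^2 - (-t) * (2*x)) / (x^2)^2))) x :=
    hrp.mul hexp
  have hweq : w =ᶠ[nhds x] (fun y : ℝ => (1 - y ^ 2) ^ α * Real.exp (-t / y ^ 2)) := by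
    filter_upwards [isOpen_ne.mem_nhds hx0] with y hy
    exact hw y hy
  have hFw := hF.congr_of_eventuallyEq hweq
  refine hFw.congr_deriv ?_
  rw [hw x hx0, Real.rpow_sub_one h2.ne' α]
  field_simp
  ring

end W


section FTC
variable {α t : ℝ} {w : ℝ → ℝ}
  (hwC : Continuous w)
  (hw2C : Continuous (fun x => w x / x^2))
  (hw0 : w 0 = 0)
  (hwd0 : HasDerivAt w 0 0)
  (hwd : ∀ {x : ℝ}, x ∈ Ioo (-1:ℝ) 1 → x ≠ 0 →
    HasDerivAt w ((-2*α*x/(1-x^2) + 2*t/x^3) * w x) x)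

include hwC hw2C hw0 hwd0 hwd

lemma FTC_identity (S U : Polynomial ℝ) (hSU : S = X * U) :
    (∫ x in (-1:ℝ)..1, (derivative S * (1-X^2) - C (2+2*α) * (X*S)).eval x * w x)
     + 2*t*(∫ x in (-1:ℝ)..1, (1 - x^2) * U.eval x * (w x / x^2)) = 0 := by
  set B : Polynomial ℝ := derivative S * (1-X^2) - C (2+2*α) * (X*S) with hB
  set g : ℝ → ℝ := fun x => B.eval x * w x + 2*t*((1 - x^2) * U.eval x * (w x / x^2)) with hg
  set G : ℝ → ℝ := fun x => (S * (1-X^2)).eval x * w x with hG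
  have hgc : Continuous g := by
    apply Continuous.add
    · exact (B.continuous.mul hwC)
    · apply Continuous.mul continuous_const
      apply Continuous.mul
      · exact Continuous.mul (by continuity) U.continuous
      · exact hw2C
  have hderiv : ∀ x ∈ Ioo (-1:ℝ) 1, HasDerivAt G (g x) x := by
    intro x hx
    have hpoly : HasDerivAt (fun y => (S * (1-X^2)).eval y)
        ((derivative (S * (1-X^2))).eval x) x := Polynomial.hasDerivAt _ x
    rcases eq_or_ne x 0 with rfl | hx0
    · have hG0 : HasDerivAt G ((derivative (S * (1-X^2))).eval 0 * w 0
          + (S * (1-X^2)).eval 0 * 0) 0 := HasDerivAt.mul hpoly hwd0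
      convert hG0 using 1
      rw [hg, hw0]
      norm_num
      exact Or.inr hw0
    · have hwx := hwd hx hx0
      have hGx : HasDerivAt G ((derivative (S * (1-X^2))).eval x * w x
          + (S * (1-X^2)).eval x * ((-2*α*x/(1-x^2) + 2*t/x^3) * w x)) x :=
        HasDerivAt.mul hpoly hwx
      convert hGx using 1
      have h2 : (1:ℝ) - x^2 ≠ 0 := by
        rcases hx with ⟨a, b⟩; nlinarith [sq_nonneg x]
      have hsx : S.eval x = x * U.eval x := by rw [hSU]; simp
      rw [hg, hB]
      simp only [Polynomial.derivative_mul, Polynomial.eval_add, Polynomial.eval_mul,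
        Polynomial.eval_sub, Polynomial.eval_one, Polynomial.eval_pow, Polynomial.eval_X,
        Polynomial.eval_C, Polynomial.derivative_one, Polynomial.derivative_X_pow,
        Polynomial.derivative_sub, Polynomial.eval_natCast, Polynomial.eval_zero]
      rw [hsx]
      field_simp
      ring
  have hint : IntervalIntegrable g MeasureTheory.volume (-1:ℝ) 1 :=
    hgc.intervalIntegrable _ _
  have hcont : ContinuousOn G (Icc (-1:ℝ) 1) :=
    (((S * (1-X^2)).continuous.mul hwC)).continuousOn
  have hFTC := intervalIntegral.integral_eq_sub_of_hasDerivAt_of_le (by norm_num) hcont hderiv hint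
  have hG1 : G 1 = 0 := by rw [hG]; simp
  have hGm1 : G (-1) = 0 := by rw [hG]; simp
  rw [hG1, hGm1, sub_zero] at hFTC
  rw [← hFTC, hg]
  rw [intervalIntegral.integral_add (f := fun x => B.eval x * w x)
    (g := fun x => 2*t*((1 - x^2) * U.eval x * (w x / x^2))) ((B.continuous.mul hwC).intervalIntegrable _ _)
    (((continuous_const.mul ((Continuous.mul (by continuity) U.continuous).mul hw2C))).intervalIntegrable _ _)]
  rw [intervalIntegral.integral_const_mul]

end FTC


lemma coeff_mul_one_sub_X_sq (p : Polynomial ℝ) (N : ℕ) :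
    (p * (1 - X^2)).coeff N = p.coeff N - (if 2 ≤ N then p.coeff (N-2) else 0) := by
  have : p * (1 - X^2) = p - p * X^2 := by ring
  rw [this, Polynomial.coeff_sub, Polynomial.coeff_mul_X_pow']

lemma coeff_X_mul' (p : Polynomial ℝ) (N : ℕ) :
    (X * p).coeff N = (if 1 ≤ N then p.coeff (N-1) else 0) := by
  have : X * p = p * X^1 := by ring
  rw [this, Polynomial.coeff_mul_X_pow']

section COEFF
variable {P : ℕ → Polynomial ℝ}
  (hmonic : ∀ n, (P n).Monic)
  (hdeg : ∀ n, (P n).natDegree = n)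
  (hpar : ∀ n k, (n + k) % 2 = 1 → (P n).coeff k = 0)

include hmonic hdeg hpar

lemma coeff_top (n : ℕ) : (P n).coeff n = 1 := by
  have := (hmonic n).leadingCoeff
  rwa [Polynomial.leadingCoeff, hdeg n] at this

lemma coeff_above (n N : ℕ) (hN : n < N) : (P n).coeff N = 0 :=
  Polynomial.coeff_eq_zero_of_natDegree_lt (by rw [hdeg n]; exact hN)

lemma Q1_deg (n : ℕ) (hn : 1 ≤ n) :
    (derivative (P n) * (1-X^2) + C (n:ℝ) * (X * P n)).natDegree ≤ n - 1 := by
  rw [Polynomial.natDegree_le_iff_coeff_eq_zero]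
  intro N hN
  have hNn : n ≤ N := by omega
  rw [Polynomial.coeff_add, coeff_mul_one_sub_X_sq, Polynomial.coeff_C_mul, coeff_X_mul']
  have h1 : (derivative (P n)).coeff N = 0 := by
    rw [Polynomial.coeff_derivative, coeff_above hmonic hdeg hpar n (N+1) (by omega), zero_mul]
  rw [h1]
  rcases eq_or_lt_of_le hNn with rfl | hlt
  · -- N = n
    rcases Nat.lt_or_ge n 2 with h2 | h2
    · -- n = 1
      have hn1 : n = 1 := by omega
      subst hn1
      simp only [if_neg (by omega : ¬ 2 ≤ 1), if_pos (by omega : 1 ≤ 1)]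
      rw [hpar 1 0 (by omega)]
      ring
    · rw [if_pos h2, if_pos (by omega : 1 ≤ n)]
      rw [Polynomial.coeff_derivative]
      have e1 : n - 2 + 1 = n - 1 := by omega
      rw [e1, hpar n (n-1) (by omega)]
      ring
  · -- N > n
    have h2 : (P n).coeff (N - 1) = 0 ∨ N = n + 1 := by
      rcases eq_or_ne N (n+1) with rfl | hne
      · right; rfl
      · left; exact coeff_above hmonic hdeg hpar n (N-1) (by omega)
    rcases h2 with h2 | rfl
    · rw [h2]
      have h3 : (if 2 ≤ N then (derivative (P n)).coeff (N-2) else 0) = 0 := by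
        rcases Nat.lt_or_ge N 2 with hN2 | hN2
        · rw [if_neg (by omega)]
        · rw [if_pos hN2, Polynomial.coeff_derivative]
          have e : N - 2 + 1 = N - 1 := by omega
          rw [e]
          rcases eq_or_ne (N-1) n with he | hne
          ·
            rw [he]
            rw [he] at h2
            rw [coeff_top hmonic hdeg hpar] at h2
            norm_num at h2
          · rw [coeff_above hmonic hdeg hpar n (N-1) (by omega), zero_mul]
      rw [h3]
      simp
    · -- N = n + 1
      rw [if_pos (by omega), if_pos (by omega)]
      have e1 : n + 1 - 2 + 1 = n := by omega
      have e2 : n + 1 - 1 = n := by omega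
      rw [Polynomial.coeff_derivative, e1, e2, coeff_top hmonic hdeg hpar]
      push_cast [Nat.cast_sub (by omega : 1 ≤ n)]
      ring

lemma Q1_coeff (n : ℕ) (hn : 1 ≤ n) :
    (derivative (P n) * (1-X^2) + C (n:ℝ) * (X * P n)).coeff (n-1)
      = n + 2 * (P n).coeff (n-2) := by
  rw [Polynomial.coeff_add, coeff_mul_one_sub_X_sq, Polynomial.coeff_C_mul, coeff_X_mul']
  rcases Nat.lt_or_ge n 2 with h2 | h2
  · have hn1 : n = 1 := by omega
    subst hn1
    simp only [show (1:ℕ) - 1 = 0 from rfl, show (1:ℕ) - 2 = 0 from rfl]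
    rw [if_neg (by omega), if_neg (by omega)]
    rw [Polynomial.coeff_derivative, coeff_top hmonic hdeg hpar, hpar 1 0 (by omega)]
    norm_num
  · rcases Nat.lt_or_ge n 3 with h3 | h3
    · have hn2 : n = 2 := by omega
      subst hn2
      norm_num
      rw [Polynomial.coeff_derivative, coeff_top hmonic hdeg hpar]
      push_cast
      ring
    · rw [if_pos (by omega), if_pos (by omega)]
      rw [Polynomial.coeff_derivative, Polynomial.coeff_derivative]
      have e0 : n - 1 - 2 = n - 3 := by omega
      have e1 : n - 1 + 1 = n := by omega
      have e2 : n - 3 + 1 = n - 2 := by omega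
      have e3 : n - 1 - 1 = n - 2 := by omega
      rw [e0, e1, e2, e3, coeff_top hmonic hdeg hpar]
      have e4 : ((n:ℝ) - 3 + 1) = (n:ℝ) - 2 := by ring
      have e5 : ((n - 3 : ℕ) : ℝ) = (n:ℝ) - 3 := by
        push_cast [Nat.cast_sub (by omega : 3 ≤ n)]; ring
      have e6 : ((n - 1 : ℕ) : ℝ) = (n:ℝ) - 1 := by
        push_cast [Nat.cast_sub (by omega : 1 ≤ n)]; ring
      rw [e5, e6]
      push_cast
      ring

lemma Q2_deg (n : ℕ) (hn : 1 ≤ n) :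
    (derivative (P (n-1)) * (1-X^2) + C ((n:ℝ)-1) * (X * P (n-1))).natDegree ≤ n - 1 := by
  rw [Polynomial.natDegree_le_iff_coeff_eq_zero]
  intro N hN
  have hNn : n ≤ N := by omega
  rw [Polynomial.coeff_add, coeff_mul_one_sub_X_sq, Polynomial.coeff_C_mul, coeff_X_mul']
  have h1 : (derivative (P (n-1))).coeff N = 0 := by
    rw [Polynomial.coeff_derivative, coeff_above hmonic hdeg hpar (n-1) (N+1) (by omega), zero_mul]
  rw [h1]
  rcases eq_or_lt_of_le hNn with rfl | hlt
  · rcases Nat.lt_or_ge n 2 with h2 | h2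
    · have hn1 : n = 1 := by omega
      subst hn1
      rw [if_neg (by omega), if_pos (by omega)]
      norm_num
    · rw [if_pos h2, if_pos (by omega : 1 ≤ n)]
      rw [Polynomial.coeff_derivative]
      have e1 : n - 2 + 1 = n - 1 := by omega
      rw [e1, coeff_top hmonic hdeg hpar]
      have e6 : ((n - 2 : ℕ) : ℝ) = (n:ℝ) - 2 := by
        push_cast [Nat.cast_sub (by omega : 2 ≤ n)]; ring
      rw [e6]
      ring
  · have h2 : (P (n-1)).coeff (N - 1) = 0 :=
      coeff_above hmonic hdeg hpar (n-1) (N-1) (by omega)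
    rw [h2]
    have h3 : (if 2 ≤ N then (derivative (P (n-1))).coeff (N-2) else 0) = 0 := by
      rcases Nat.lt_or_ge N 2 with hN2 | hN2
      · rw [if_neg (by omega)]
      · rw [if_pos hN2, Polynomial.coeff_derivative]
        have e : N - 2 + 1 = N - 1 := by omega
        rw [e, h2, zero_mul]
    rw [h3]
    simp

end COEFF


section OPS
variable {w : ℝ → ℝ} {P : ℕ → Polynomial ℝ} {h : ℕ → ℝ}
  (hwC : Continuous w)
  (hmonic : ∀ n, (P n).Monic)
  (hdeg : ∀ n, (P n).natDegree = n)
  (horth : ∀ j k, (∫ x in (-1:ℝ)..1, (P j).eval x * (P k).eval x * w x)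
      = if j = k then h j else 0)

include hwC hmonic hdeg horth

lemma integrable_poly_w (Q : Polynomial ℝ) :
    IntervalIntegrable (fun x => Q.eval x * w x) MeasureTheory.volume (-1:ℝ) 1 := by
  apply Continuous.intervalIntegrable
  exact (Q.continuous_aeval.mul hwC)

lemma P_zero : P 0 = 1 := by
  have := hdeg 0
  exact ((hmonic 0).natDegree_eq_zero).mp this

lemma expandA : ∀ m (Q : Polynomial ℝ), Q.natDegree ≤ m → ∀ k, m ≤ k →
    (∫ x in (-1:ℝ)..1, Q.eval x * (P k).eval x * w x) = Q.coeff k * h k := by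
  intro m
  induction m with
  | zero =>
    intro Q hQ k hk
    have hQC : Q = C (Q.coeff 0) := Polynomial.eq_C_of_natDegree_le_zero hQ
    have h1 : (∫ x in (-1:ℝ)..1, Q.eval x * (P k).eval x * w x)
        = Q.coeff 0 * ∫ x in (-1:ℝ)..1, (P 0).eval x * (P k).eval x * w x := by
      rw [← intervalIntegral.integral_const_mul]
      congr 1; funext x
      rw [P_zero hwC hmonic hdeg horth]
      conv_lhs => rw [hQC]
      simp; ring
    rw [h1, horth 0 k]
    rcases Nat.eq_zero_or_pos k with rfl | hk0
    · simp
    · have : (0:ℕ) ≠ k := by omega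
      have hQk : Q.coeff k = 0 :=
        Polynomial.coeff_eq_zero_of_natDegree_lt (lt_of_le_of_lt hQ hk0)
      simp [this, hQk]
  | succ m ih =>
    intro Q hQ k hk
    set c := Q.coeff (m+1) with hc
    set Q' := Q - C c * P (m+1) with hQ'
    have hdq : Q'.natDegree ≤ m := by
      rw [Polynomial.natDegree_le_iff_coeff_eq_zero]
      intro N hN
      rw [hQ']
      simp only [Polynomial.coeff_sub, Polynomial.coeff_C_mul]
      rcases eq_or_lt_of_le (Nat.succ_le_of_lt hN) with hNe | hNl
      · have hNe' : N = m + 1 := hNe.symm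
        subst hNe'
        have : (P (m+1)).coeff (m+1) = 1 := by
          have := (hmonic (m+1)).leadingCoeff
          rwa [Polynomial.leadingCoeff, hdeg (m+1)] at this
        rw [this, mul_one, ← hc, sub_self]
      · have h1 : Q.coeff N = 0 := by
          apply Polynomial.coeff_eq_zero_of_natDegree_lt
          exact lt_of_le_of_lt hQ hNl
        have h2 : (P (m+1)).coeff N = 0 := by
          apply Polynomial.coeff_eq_zero_of_natDegree_lt
          rw [hdeg (m+1)]; exact hNl
        rw [h1, h2, mul_zero, sub_zero]
    have hsplit : (∫ x in (-1:ℝ)..1, Q.eval x * (P k).eval x * w x)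
        = (∫ x in (-1:ℝ)..1, Q'.eval x * (P k).eval x * w x)
          + c * ∫ x in (-1:ℝ)..1, (P (m+1)).eval x * (P k).eval x * w x := by
      rw [← intervalIntegral.integral_const_mul, ← intervalIntegral.integral_add]
      · congr 1; funext x
        rw [hQ']
        simp only [Polynomial.eval_sub, Polynomial.eval_mul, Polynomial.eval_C]
        ring
      · have := integrable_poly_w hwC hmonic hdeg horth (Q' * P k)
        simpa [Polynomial.eval_mul, mul_assoc] using this
      · have := integrable_poly_w hwC hmonic hdeg horth (P (m+1) * P k)
        have h2 := this.const_mul c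
        simpa [Polynomial.eval_mul, mul_assoc] using h2
    rw [hsplit, ih Q' hdq k (le_trans (Nat.le_succ m) hk), horth (m+1) k]
    rcases eq_or_lt_of_le hk with hke | hkl
    · subst hke
      have hQ'c : Q'.coeff (m+1) = 0 := by
        apply Polynomial.coeff_eq_zero_of_natDegree_lt
        omega
      have : (m+1 = m+1) := rfl
      simp [hQ'c, hc]
    · have hne : m + 1 ≠ k := by omega
      have hQk : Q.coeff k = 0 := Polynomial.coeff_eq_zero_of_natDegree_lt (lt_of_le_of_lt hQ hkl)
      have hQ'k : Q'.coeff k = 0 := Polynomial.coeff_eq_zero_of_natDegree_lt (lt_of_le_of_lt hdq (by omega))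
      simp [hne, hQk, hQ'k]

lemma expandA' (Q : Polynomial ℝ) (k : ℕ) (hQ : Q.natDegree ≤ k) :
    (∫ x in (-1:ℝ)..1, Q.eval x * (P k).eval x * w x) = Q.coeff k * h k :=
  expandA hwC hmonic hdeg horth k Q hQ k le_rfl

end OPS


lemma coeff_comp_neg_X (p : Polynomial ℝ) (k : ℕ) :
    (p.comp (-X)).coeff k = (-1) ^ k * p.coeff k := by
  induction p using Polynomial.induction_on' with
  | add p q hp hq => simp [add_comp, hp, hq, mul_add]
  | monomial i a =>
      have hC : ((-1 : Polynomial ℝ)) ^ i = C ((-1) ^ i) := by simp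
      rw [monomial_comp, neg_pow, hC, mul_left_comm, coeff_C_mul,
        C_mul_X_pow_eq_monomial, coeff_monomial]
      rcases eq_or_ne i k with rfl | hik
      · simp [coeff_monomial]
      · simp [coeff_monomial, hik]

section OPS
variable {w : ℝ → ℝ} {P : ℕ → Polynomial ℝ} {h : ℕ → ℝ}
  (hwC : Continuous w)
  (hmonic : ∀ n, (P n).Monic)
  (hdeg : ∀ n, (P n).natDegree = n)
  (horth : ∀ j k, (∫ x in (-1:ℝ)..1, (P j).eval x * (P k).eval x * w x)
      = if j = k then h j else 0)

include hwC hmonic hdeg horth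


lemma integrable_poly_w' (Q : Polynomial ℝ) :
    IntervalIntegrable (fun x => Q.eval x * w x) MeasureTheory.volume (-1:ℝ) 1 :=
  (Q.continuous_aeval.mul hwC).intervalIntegrable _ _

variable (hpos : ∀ n, 0 < h n) (hwe : ∀ x, w (-x) = w x)
  (expandA' : ∀ (Q : Polynomial ℝ) (k : ℕ), Q.natDegree ≤ k →
    (∫ x in (-1:ℝ)..1, Q.eval x * (P k).eval x * w x) = Q.coeff k * h k)

include hpos hwe expandA'

lemma P_parity (n : ℕ) : C ((-1:ℝ)^n) * (P n).comp (-X) = P n := by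
  set Q : Polynomial ℝ := C ((-1:ℝ)^n) * (P n).comp (-X) with hQdef
  have hQcoeff : ∀ k, Q.coeff k = (-1:ℝ)^n * ((-1)^k * (P n).coeff k) := by
    intro k
    rw [hQdef, coeff_C_mul, coeff_comp_neg_X]
  have hQn : Q.coeff n = 1 := by
    rw [hQcoeff n, ← mul_assoc, ← mul_pow]
    have : (P n).coeff n = 1 := by
      have := (hmonic n).leadingCoeff
      rwa [Polynomial.leadingCoeff, hdeg n] at this
    simp [this]
  have hQdeg : Q.natDegree ≤ n := by
    rw [Polynomial.natDegree_le_iff_coeff_eq_zero]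
    intro N hN
    rw [hQcoeff N, Polynomial.coeff_eq_zero_of_natDegree_lt (by rw [hdeg n]; exact hN)]
    ring
  set D : Polynomial ℝ := Q - P n with hDdef
  have hDcoeffn : D.coeff n = 0 := by
    rw [hDdef, Polynomial.coeff_sub, hQn]
    have : (P n).coeff n = 1 := by
      have := (hmonic n).leadingCoeff
      rwa [Polynomial.leadingCoeff, hdeg n] at this
    rw [this, sub_self]
  have hDdeg : D.natDegree ≤ n := by
    apply le_trans (Polynomial.natDegree_sub_le _ _)
    simp [hQdeg, hdeg n]
  by_cases hD : D = 0
  · have := sub_eq_zero.mp (hDdef ▸ hD)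
    exact this
  · exfalso
    set d := D.natDegree with hd
    have hdn : d < n := by
      rcases eq_or_lt_of_le hDdeg with he | hl
      · exfalso
        apply hD
        have : D.leadingCoeff = 0 := by rw [Polynomial.leadingCoeff, ← hd, he, hDcoeffn]
        exact Polynomial.leadingCoeff_eq_zero.mp this
      · exact hl
    -- ∫ D P_d w = D.coeff d * h d ≠ 0
    have h1 : (∫ x in (-1:ℝ)..1, D.eval x * (P d).eval x * w x) = D.coeff d * h d :=
      expandA' D d le_rfl
    -- but also = ∫ Q P_d w - ∫ P_n P_d w = 0 - 0
    have hQint : (∫ x in (-1:ℝ)..1, Q.eval x * (P d).eval x * w x) = 0 := by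
      have hptw : ∀ x : ℝ, Q.eval x * (P d).eval x * w x
          = (-1:ℝ)^n * (((P d).comp (-X)).eval (-x) * (P n).eval (-x) * w (-x)) := by
        intro x
        rw [hQdef]
        simp only [Polynomial.eval_mul, Polynomial.eval_C, Polynomial.eval_comp,
          Polynomial.eval_neg, Polynomial.eval_X, neg_neg, hwe]
        ring
      rw [intervalIntegral.integral_congr (fun x _ => hptw x)]
      rw [intervalIntegral.integral_const_mul]
      have hneg := intervalIntegral.integral_comp_neg
        (fun y => ((P d).comp (-X)).eval y * (P n).eval y * w y) (a := -1) (b := 1)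
      simp only [neg_neg] at hneg
      rw [hneg]
      have : (∫ x in (-1:ℝ)..1, ((P d).comp (-X)).eval x * (P n).eval x * w x)
          = ((P d).comp (-X)).coeff n * h n := by
        apply expandA'
        calc ((P d).comp (-X)).natDegree ≤ (P d).natDegree * (-X : Polynomial ℝ).natDegree :=
          Polynomial.natDegree_comp_le
        _ ≤ d * 1 := by rw [hdeg d]; simp
        _ ≤ n := by omega
      rw [this, Polynomial.coeff_eq_zero_of_natDegree_lt, zero_mul, mul_zero]
      calc ((P d).comp (-X)).natDegree ≤ d * 1 := by
            refine le_trans Polynomial.natDegree_comp_le ?_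
            rw [hdeg d]; simp
      _ < n := by omega
    have hPint : (∫ x in (-1:ℝ)..1, (P n).eval x * (P d).eval x * w x) = 0 := by
      rw [horth n d, if_neg (by omega)]
    have h2 : (∫ x in (-1:ℝ)..1, D.eval x * (P d).eval x * w x) = 0 := by
      have hsplit : (∫ x in (-1:ℝ)..1, D.eval x * (P d).eval x * w x)
          = (∫ x in (-1:ℝ)..1, Q.eval x * (P d).eval x * w x)
            - ∫ x in (-1:ℝ)..1, (P n).eval x * (P d).eval x * w x := by
        rw [← intervalIntegral.integral_sub]
        · congr 1; funext x
          rw [hDdef]; simp only [Polynomial.eval_sub]; ring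
        · simpa [Polynomial.eval_mul, mul_assoc] using integrable_poly_w' hwC hmonic hdeg horth (Q * P d)
        · simpa [Polynomial.eval_mul, mul_assoc] using integrable_poly_w' hwC hmonic hdeg horth (P n * P d)
      rw [hsplit, hQint, hPint, sub_zero]
    rw [h1] at h2
    have : D.coeff d ≠ 0 := by
      rw [hd]
      exact Polynomial.leadingCoeff_ne_zero.mpr hD
    rcases mul_eq_zero.mp h2 with hc | hh
    · exact this hc
    · exact (hpos d).ne' hh

lemma P_coeff_parity (n k : ℕ) (hnk : (n + k) % 2 = 1) : (P n).coeff k = 0 := by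
  have hp := P_parity hwC hmonic hdeg horth hpos hwe expandA' n
  have := congrArg (fun q => q.coeff k) hp
  simp only [coeff_C_mul, coeff_comp_neg_X] at this
  have hsign : ((-1:ℝ))^n * (-1)^k = -1 := by
    rw [← pow_add]
    exact Odd.neg_one_pow (Nat.odd_iff.mpr hnk)
  rw [← mul_assoc, hsign] at this
  linarith [this]
end OPS
set_option maxHeartbeats 1000000 in
theorem stmt_6
    (α t : ℝ) (hα : 0 < α) (ht : 0 < t)
    (w : ℝ → ℝ)
    (hw : ∀ x : ℝ, x ≠ 0 → w x = (1 - x ^ 2) ^ α * Real.exp (-t / x ^ 2))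
    (hw0 : w 0 = 0)
    (P : ℕ → Polynomial ℝ)
    (hmonic : ∀ n, (P n).Monic)
    (hdeg : ∀ n, (P n).natDegree = n)
    (h : ℕ → ℝ)
    (hpos : ∀ n, 0 < h n)
    (horth : ∀ j k, (∫ x in (-1:ℝ)..1, (P j).eval x * (P k).eval x * w x)
      = if j = k then h j else 0)
    (r : ℕ → ℝ) (hr0 : r 0 = 0)
    (hr : ∀ n : ℕ, 1 ≤ n → r n = 2 * t / h (n - 1) *
      ∫ y in (-1:ℝ)..1, (P n).eval y * (P (n - 1)).eval y * w y / y ^ 3)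
    (β : ℕ → ℝ) (hβ0 : β 0 = 0)
    (hβ : ∀ n : ℕ, 1 ≤ n → β n = h n / h (n - 1))
    (p : ℕ → ℝ) (hp0 : p 0 = 0) (hp1 : p 1 = 0)
    (hp : ∀ n : ℕ, 2 ≤ n → p n = (P n).coeff (n - 2))
    :
    ∀ n : ℕ,
      (1 - (-1 : ℝ) ^ n) * t + (2 * (n : ℝ) + 1 + 2 * α) * β n - 2 * p n
        = (n : ℝ) + r n := by
  intro n
  rcases Nat.eq_zero_or_pos n with rfl | hn
  · simp [hβ0, hp0, hr0]
  · -- main case: n ≥ 1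
    have hwC : Continuous w := w_cont hα ht hw hw0
    have hw2C : Continuous (fun x => w x / x^2) := w_div_sq_cont hα ht hw hw0
    have hwe : ∀ x, w (-x) = w x := w_even hα ht hw hw0
    have hexp : ∀ (Q : Polynomial ℝ) (k : ℕ), Q.natDegree ≤ k →
        (∫ x in (-1:ℝ)..1, Q.eval x * (P k).eval x * w x) = Q.coeff k * h k :=
      fun Q k hQ => expandA' hwC hmonic hdeg horth Q k hQ
    have hpar : ∀ m k, (m + k) % 2 = 1 → (P m).coeff k = 0 :=
      fun m k hmk => P_coeff_parity hwC hmonic hdeg horth hpos hwe hexp m k hmk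
    have hint : ∀ Q : Polynomial ℝ,
        IntervalIntegrable (fun x => Q.eval x * w x) MeasureTheory.volume (-1:ℝ) 1 :=
      fun Q => (Q.continuous.mul hwC).intervalIntegrable _ _
    have hintk : ∀ (Q : Polynomial ℝ) (k : ℕ),
        IntervalIntegrable (fun x => Q.eval x * (P k).eval x * w x) MeasureTheory.volume (-1:ℝ) 1 :=
      fun Q k => ((Q.continuous.mul (P k).continuous).mul hwC).intervalIntegrable _ _
    have hh' : h (n-1) ≠ 0 := (hpos (n-1)).ne'
    have hb : h n = β n * h (n-1) := by
      rw [hβ n hn, div_mul_cancel₀ _ hh']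
    have hpn : p n = (P n).coeff (n-2) := by
      rcases Nat.lt_or_ge n 2 with h2 | h2
      · have hn1 : n = 1 := by omega
        subst hn1
        rw [hp1, hpar 1 0 (by omega)]
      · exact hp n h2
    set S : Polynomial ℝ := P n * P (n-1) with hS
    -- obtain U with S = X * U and the value of ∫ U w
    obtain ⟨U, hSU, hUval⟩ :
        ∃ U : Polynomial ℝ, S = X * U ∧
          (∫ x in (-1:ℝ)..1, U.eval x * w x) = (if n % 2 = 1 then h (n-1) else 0) := by
      rcases Nat.even_or_odd n with he | ho
      · have hev : n % 2 = 0 := Nat.even_iff.mp he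
        have hn2 : 2 ≤ n := by omega
        have hc0 : (P (n-1)).coeff 0 = 0 := hpar (n-1) 0 (by omega)
        set Qd := (P (n-1)).divX with hQd
        have hX : X * Qd = P (n-1) := by
          have h1 := Polynomial.X_mul_divX_add (P (n-1))
          rwa [hc0, map_zero, add_zero] at h1
        refine ⟨P n * Qd, by rw [hS, ← hX]; ring, ?_⟩
        have hQdeg : Qd.natDegree ≤ n := by
          rw [Polynomial.natDegree_le_iff_coeff_eq_zero]
          intro N hN
          rw [hQd, Polynomial.coeff_divX]
          exact coeff_above hmonic hdeg hpar (n-1) (N+1) (by omega)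
        have h1 : (∫ x in (-1:ℝ)..1, (P n * Qd).eval x * w x)
            = ∫ x in (-1:ℝ)..1, Qd.eval x * (P n).eval x * w x := by
          congr 1; funext x; simp only [Polynomial.eval_mul]; ring
        rw [h1, hexp Qd n hQdeg, hQd, Polynomial.coeff_divX,
          coeff_above hmonic hdeg hpar (n-1) (n+1) (by omega), zero_mul, if_neg (by omega)]
      · have hodd : n % 2 = 1 := Nat.odd_iff.mp ho
        have hc0 : (P n).coeff 0 = 0 := hpar n 0 (by omega)
        set R := (P n).divX with hR
        have hX : X * R = P n := by
          have h1 := Polynomial.X_mul_divX_add (P n)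
          rwa [hc0, map_zero, add_zero] at h1
        refine ⟨R * P (n-1), by rw [hS, ← hX]; ring, ?_⟩
        have hRdeg : R.natDegree ≤ n - 1 := by
          rw [Polynomial.natDegree_le_iff_coeff_eq_zero]
          intro N hN
          rw [hR, Polynomial.coeff_divX]
          exact coeff_above hmonic hdeg hpar n (N+1) (by omega)
        have h1 : (∫ x in (-1:ℝ)..1, (R * P (n-1)).eval x * w x)
            = ∫ x in (-1:ℝ)..1, R.eval x * (P (n-1)).eval x * w x := by
          congr 1; funext x; simp only [Polynomial.eval_mul]
        have h2 : R.coeff (n-1) = 1 := by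
          rw [hR, Polynomial.coeff_divX, show n - 1 + 1 = n by omega,
            coeff_top hmonic hdeg hpar]
        rw [h1, hexp R (n-1) hRdeg, h2, one_mul, if_pos hodd]
    -- FTC identity
    have key := FTC_identity (α := α) (t := t) hwC hw2C hw0
      (w_hasDeriv_zero hα ht hw hw0)
      (fun {x} hx hx0 => w_hasDeriv hα ht hw hw0 hx hx0) S U hSU
    -- value of ∫ (X * P (n-1)) * P n * w
    have hXPdeg : (X * P (n-1)).natDegree ≤ n := by
      rw [Polynomial.natDegree_le_iff_coeff_eq_zero]
      intro N hN
      rw [coeff_X_mul', if_pos (by omega)]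
      exact coeff_above hmonic hdeg hpar (n-1) (N-1) (by omega)
    have hIc : (∫ x in (-1:ℝ)..1, (X * (P (n-1))).eval x * (P n).eval x * w x) = h n := by
      rw [hexp (X * P (n-1)) n hXPdeg, coeff_X_mul', if_pos (by omega : 1 ≤ n),
        show n - 1 = n - 1 from rfl, coeff_top hmonic hdeg hpar, one_mul]
    -- split the B-integral
    have hBsplit : (∫ x in (-1:ℝ)..1,
          (derivative S * (1-X^2) - Polynomial.C (2+2*α) * (X*S)).eval x * w x)
        = (∫ x in (-1:ℝ)..1, (derivative (P n) * (1-X^2)).eval x * (P (n-1)).eval x * w x)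
          + ((∫ x in (-1:ℝ)..1, (derivative (P (n-1)) * (1-X^2)).eval x * (P n).eval x * w x)
          - (2+2*α) * (∫ x in (-1:ℝ)..1, (X * (P (n-1))).eval x * (P n).eval x * w x)) := by
      rw [← intervalIntegral.integral_const_mul]
      rw [← intervalIntegral.integral_sub
        (hintk (derivative (P (n-1)) * (1-X^2)) n)
        ((hintk (X * (P (n-1))) n).const_mul (2+2*α))]
      rw [← intervalIntegral.integral_add
        (hintk (derivative (P n) * (1-X^2)) (n-1))
        ((hintk (derivative (P (n-1)) * (1-X^2)) n).sub
          ((hintk (X * (P (n-1))) n).const_mul (2+2*α)))]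
      congr 1; funext x
      rw [hS]
      simp only [Polynomial.derivative_mul, Polynomial.eval_add, Polynomial.eval_mul,
        Polynomial.eval_sub, Polynomial.eval_one, Polynomial.eval_pow, Polynomial.eval_X,
        Polynomial.eval_C]
      ring
    -- value of I_a
    have hIa : (∫ x in (-1:ℝ)..1, (derivative (P n) * (1-X^2)).eval x * (P (n-1)).eval x * w x)
        = ((n:ℝ) + 2 * (P n).coeff (n-2)) * h (n-1) - (n:ℝ) * h n := by
      have hsplit : (∫ x in (-1:ℝ)..1, (derivative (P n) * (1-X^2)).eval x * (P (n-1)).eval x * w x)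
          = (∫ x in (-1:ℝ)..1,
              (derivative (P n) * (1-X^2) + Polynomial.C (n:ℝ) * (X * P n)).eval x * (P (n-1)).eval x * w x)
            - (n:ℝ) * ∫ x in (-1:ℝ)..1, (X * (P (n-1))).eval x * (P n).eval x * w x := by
        rw [← intervalIntegral.integral_const_mul]
        rw [← intervalIntegral.integral_sub
          (hintk (derivative (P n) * (1-X^2) + Polynomial.C (n:ℝ) * (X * P n)) (n-1))
          ((hintk (X * (P (n-1))) n).const_mul (n:ℝ))]
        congr 1; funext x
        simp only [Polynomial.eval_add, Polynomial.eval_mul, Polynomial.eval_sub,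
          Polynomial.eval_one, Polynomial.eval_pow, Polynomial.eval_X, Polynomial.eval_C]
        ring
      rw [hsplit, hIc, hexp _ (n-1) (Q1_deg hmonic hdeg hpar n hn),
        Q1_coeff hmonic hdeg hpar n hn]
    -- value of I_b
    have hIb : (∫ x in (-1:ℝ)..1, (derivative (P (n-1)) * (1-X^2)).eval x * (P n).eval x * w x)
        = -(((n:ℝ) - 1) * h n) := by
      have hsplit : (∫ x in (-1:ℝ)..1, (derivative (P (n-1)) * (1-X^2)).eval x * (P n).eval x * w x)
          = (∫ x in (-1:ℝ)..1,
              (derivative (P (n-1)) * (1-X^2) + Polynomial.C ((n:ℝ)-1) * (X * P (n-1))).eval x * (P n).eval x * w x)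
            - ((n:ℝ)-1) * ∫ x in (-1:ℝ)..1, (X * (P (n-1))).eval x * (P n).eval x * w x := by
        rw [← intervalIntegral.integral_const_mul]
        rw [← intervalIntegral.integral_sub
          (hintk (derivative (P (n-1)) * (1-X^2) + Polynomial.C ((n:ℝ)-1) * (X * P (n-1))) n)
          ((hintk (X * (P (n-1))) n).const_mul ((n:ℝ)-1))]
        congr 1; funext x
        simp only [Polynomial.eval_add, Polynomial.eval_mul, Polynomial.eval_sub,
          Polynomial.eval_one, Polynomial.eval_pow, Polynomial.eval_X, Polynomial.eval_C]
        ring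
      have hQ2coeff : (derivative (P (n-1)) * (1-X^2) + Polynomial.C ((n:ℝ)-1) * (X * P (n-1))).coeff n = 0 := by
        apply Polynomial.coeff_eq_zero_of_natDegree_lt
        calc (derivative (P (n-1)) * (1-X^2) + Polynomial.C ((n:ℝ)-1) * (X * P (n-1))).natDegree
            ≤ n - 1 := Q2_deg hmonic hdeg hpar n hn
        _ < n := by omega
      rw [hsplit, hIc, hexp _ n (le_trans (Q2_deg hmonic hdeg hpar n hn) (by omega)),
        hQ2coeff, zero_mul, zero_sub]
    -- the J integral
    set K : ℝ := ∫ y in (-1:ℝ)..1, (P n).eval y * (P (n-1)).eval y * w y / y ^ 3 with hKdef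
    have hJ : (∫ x in (-1:ℝ)..1, (1 - x^2) * U.eval x * (w x / x^2))
        = K - (∫ x in (-1:ℝ)..1, U.eval x * w x) := by
      have hfun : (fun y => (P n).eval y * (P (n-1)).eval y * w y / y^3)
          = fun y => U.eval y * (w y / y^2) := by
        funext y
        rcases eq_or_ne y 0 with rfl | hy
        · simp
        · have hSy : (P n).eval y * (P (n-1)).eval y = y * U.eval y := by
            have h1 := congrArg (Polynomial.eval y) hSU
            simpa [hS, Polynomial.eval_mul] using h1
          rw [hSy]
          field_simp
      have hKval : K = ∫ x in (-1:ℝ)..1, U.eval x * (w x / x^2) := by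
        rw [hKdef, hfun]
      have hptw : ∀ x : ℝ, (1 - x^2) * U.eval x * (w x / x^2)
          = U.eval x * (w x / x^2) - U.eval x * w x := by
        intro x
        rcases eq_or_ne x 0 with rfl | hx
        · simp [hw0]
        · field_simp
      have hsplit : (∫ x in (-1:ℝ)..1, (1 - x^2) * U.eval x * (w x / x^2))
          = (∫ x in (-1:ℝ)..1, U.eval x * (w x / x^2)) - ∫ x in (-1:ℝ)..1, U.eval x * w x := by
        rw [← intervalIntegral.integral_sub (f := fun x => U.eval x * (w x / x^2))
          (g := fun x => U.eval x * w x)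
          ((U.continuous.mul hw2C).intervalIntegrable _ _)
          (hint U)]
        congr 1; funext x
        exact hptw x
      rw [hsplit, ← hKval]
    have hK : 2 * t * K = r n * h (n-1) := by
      rw [hr n hn, ← hKdef]
      field_simp
    -- assemble
    rw [hBsplit, hIa, hIb, hIc, hJ, hUval] at key
    rw [hpn]
    set c : ℝ := (P n).coeff (n-2) with hc
    rcases Nat.even_or_odd n with he | ho
    · have hev : n % 2 = 0 := Nat.even_iff.mp he
      rw [if_neg (by omega)] at key
      have hpow : ((-1:ℝ))^n = 1 := he.neg_one_pow
      rw [hpow]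
      have key3 : ((n:ℝ) + 2*c - (2*(n:ℝ)+1+2*α) * β n + r n) * h (n-1) = 0 := by
        linear_combination key + (2*(n:ℝ)+1+2*α) * hb - hK
      have hz := (mul_eq_zero.mp key3).resolve_right hh'
      linarith
    · have hodd : n % 2 = 1 := Nat.odd_iff.mp ho
      rw [if_pos hodd] at key
      have hpow : ((-1:ℝ))^n = -1 := ho.neg_one_pow
      rw [hpow]
      have key3 : ((n:ℝ) + 2*c - (2*(n:ℝ)+1+2*α) * β n + r n - 2*t) * h (n-1) = 0 := by
        linear_combination key + (2*(n:ℝ)+1+2*α) * hb - hK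
      have hz := (mul_eq_zero.mp key3).resolve_right hh'
      linarith
end
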